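/- Let λ, μ ∈ ℝ with μ > 0, let A = ((λ, −μ), (μ, λ)), let η ∈ ℝ² be nonzero, and let the control range Ω ⊆ ℝ be an interval that is unbounded (above or below). Then the linear control system ẋ = Ax + uη, u ∈ Ω, is controllable: for all v, w ∈ ℝ², one has w ∈ R⁺(v). -/

import Mathlib

noncomputable section

open Real Set RealInnerProductSpace

/-- The Euclidean plane. -/
abbrev E2 : Type := EuclideanSpace ℝ (Fin 2)

/-- The vector `(a, b)` in the Euclidean plane. -/
def vec2 (a b : ℝ) : E2 := WithLp.toLp 2 ![a, b]

/-- Counterclockwise rotation of angle `φ`. -/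
def rotMap (φ : ℝ) (v : E2) : E2 :=
  vec2 (Real.cos φ * v 0 - Real.sin φ * v 1) (Real.sin φ * v 0 + Real.cos φ * v 1)

/-- `θ`, the counterclockwise rotation by `π/2`. -/
def thetaMap (v : E2) : E2 := vec2 (-(v 1)) (v 0)

/-- The linear map with matrix `A = ((l, -m), (m, l))`. -/
def Amap (l m : ℝ) (v : E2) : E2 := vec2 (l * v 0 - m * v 1) (m * v 0 + l * v 1)

/-- The inverse `A⁻¹` of the matrix `A = ((l, -m), (m, l))` (with `det A = l² + m² ≠ 0`). -/
def AinvMap (l m : ℝ) (v : E2) : E2 :=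
  (1 / (l ^ 2 + m ^ 2)) • vec2 (l * v 0 + m * v 1) (-m * v 0 + l * v 1)

/-- The matrix exponential `e^{τA} = e^{τl} R_{τm}` for `A = ((l, -m), (m, l))`. -/
def expA (l m τ : ℝ) (v : E2) : E2 := Real.exp (τ * l) • rotMap (τ * m) v

/-- The equilibrium `v(u) = -u A⁻¹ η`. -/
def equil (l m : ℝ) (η : E2) (u : ℝ) : E2 := (-u) • AinvMap l m η

/-- The solution `φ(s, v, u) = e^{sA}(v - v(u)) + v(u)` of `ẋ = Ax + uη` for constant control. -/
def phi (l m : ℝ) (η : E2) (s : ℝ) (v : E2) (u : ℝ) : E2 :=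
  expA l m s (v - equil l m η u) + equil l m η u

/-- The spiral `φ_A(τ, v₁, v₂) = e^{τA}(v₁ - v₂) + v₂`. -/
def phiA (l m : ℝ) (τ : ℝ) (v₁ v₂ : E2) : E2 := expA l m τ (v₁ - v₂) + v₂

/-- The region `C_A(v₁, v₂)`. -/
def CA (l m : ℝ) (v₁ v₂ : E2) : Set E2 :=
  {v | 0 ≤ ⟪v - v₂, thetaMap (v₁ - v₂)⟫ ∧
    ∀ τ ∈ Icc (0 : ℝ) (π / m),
      0 ≤ ⟪v - phiA l m τ v₁ v₂, thetaMap (Amap l m (expA l m τ (v₁ - v₂)))⟫}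

/-- Concatenated solution associated to a finite list of (time, control) pairs. -/
def trajComp (l m : ℝ) (η : E2) : E2 → List (ℝ × ℝ) → E2
  | v, [] => v
  | v, p :: rest => trajComp l m η (phi l m η p.1 v p.2) rest

/-- The forward reachable set `R⁺(v)`. -/
def ReachPlus (l m : ℝ) (η : E2) (Ω : Set ℝ) (v : E2) : Set E2 :=
  {w | ∃ L : List (ℝ × ℝ), (∀ p ∈ L, 0 ≤ p.1 ∧ p.2 ∈ Ω) ∧ w = trajComp l m η v L}

/-- The backward reachable set `R⁻(v)` (forward reachable set of the time-reversed system). -/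
def ReachMinus (l m : ℝ) (η : E2) (Ω : Set ℝ) (v : E2) : Set E2 :=
  {w | ∃ L : List (ℝ × ℝ), (∀ p ∈ L, p.1 ≤ 0 ∧ p.2 ∈ Ω) ∧ w = trajComp l m η v L}

/-- An admissible trajectory of the system starting at `v`. -/
def IsAdmissibleTraj (l m : ℝ) (η : E2) (Ω : Set ℝ) (v : E2) (x : ℝ → E2) : Prop :=
  x 0 = v ∧
  ∃ t : ℕ → ℝ, t 0 = 0 ∧ StrictMono t ∧ (∀ M : ℝ, ∃ n, M < t n) ∧
    ∃ u : ℕ → ℝ, (∀ k, u k ∈ Ω) ∧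
      ∀ k, ∀ s ∈ Icc (t k) (t (k + 1)), x s = phi l m η (s - t k) (x (t k)) (u k)

/-- An admissible trajectory of the time-reversed system starting at `v`. -/
def IsAdmissibleTrajRev (l m : ℝ) (η : E2) (Ω : Set ℝ) (v : E2) (x : ℝ → E2) : Prop :=
  x 0 = v ∧
  ∃ t : ℕ → ℝ, t 0 = 0 ∧ StrictMono t ∧ (∀ M : ℝ, ∃ n, M < t n) ∧
    ∃ u : ℕ → ℝ, (∀ k, u k ∈ Ω) ∧
      ∀ k, ∀ s ∈ Icc (t k) (t (k + 1)), x s = phi l m η (-(s - t k)) (x (t k)) (u k)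

/-- Conditions (a) and (b) of the definition of a control set. -/
def ControlSetAxioms (l m : ℝ) (η : E2) (Ω : Set ℝ) (D : Set E2) : Prop :=
  (∀ v ∈ D, ∃ x : ℝ → E2, IsAdmissibleTraj l m η Ω v x ∧ ∀ s : ℝ, 0 ≤ s → x s ∈ D) ∧
  ∀ v ∈ D, D ⊆ closure (ReachPlus l m η Ω v)

/-- A control set: a set satisfying (a) and (b), maximal with respect to set inclusion. -/
def IsControlSet (l m : ℝ) (η : E2) (Ω : Set ℝ) (D : Set E2) : Prop :=
  ControlSetAxioms l m η Ω D ∧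
    ∀ D' : Set E2, ControlSetAxioms l m η Ω D' → D ⊆ D' → D' = D

/-- Conditions (a) and (b) of the definition of a control set of the time-reversed system. -/
def ControlSetAxiomsRev (l m : ℝ) (η : E2) (Ω : Set ℝ) (D : Set E2) : Prop :=
  (∀ v ∈ D, ∃ x : ℝ → E2, IsAdmissibleTrajRev l m η Ω v x ∧ ∀ s : ℝ, 0 ≤ s → x s ∈ D) ∧
  ∀ v ∈ D, D ⊆ closure (ReachMinus l m η Ω v)

/-- A control set of the time-reversed system. -/
def IsControlSetRev (l m : ℝ) (η : E2) (Ω : Set ℝ) (D : Set E2) : Prop :=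
  ControlSetAxiomsRev l m η Ω D ∧
    ∀ D' : Set E2, ControlSetAxiomsRev l m η Ω D' → D ⊆ D' → D' = D

/-- `ρ = e^{πλ/μ}`. -/
def rho (l m : ℝ) : ℝ := Real.exp (π * l / m)

/-- The point `P⁺ = ((-u⁺ + ρ u⁻)/(1 - ρ)) A⁻¹ η`. -/
def Pplus (l m : ℝ) (η : E2) (um up : ℝ) : E2 :=
  ((-up + rho l m * um) / (1 - rho l m)) • AinvMap l m η

/-- The point `P⁻ = ((-u⁻ + ρ u⁺)/(1 - ρ)) A⁻¹ η`. -/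
def Pminus (l m : ℝ) (η : E2) (um up : ℝ) : E2 :=
  ((-um + rho l m * up) / (1 - rho l m)) • AinvMap l m η

/-- The region `C = C_A(P⁺, v(u⁻)) ∪ C_A(P⁻, v(u⁺))`. -/
def regionC (l m : ℝ) (η : E2) (um up : ℝ) : Set E2 :=
  CA l m (Pplus l m η um up) (equil l m η um) ∪ CA l m (Pminus l m η um up) (equil l m η up)

/-- The sequence `P₀ = v(u⁺)`, `P_{2n+1} = φ(π/μ, P_{2n}, u⁻)`, `P_{2n+2} = φ(π/μ, P_{2n+1}, u⁺)`. -/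
def Pseq (l m : ℝ) (η : E2) (um up : ℝ) : ℕ → E2
  | 0 => equil l m η up
  | n + 1 => phi l m η (π / m) (Pseq l m η um up n) (if n % 2 = 0 then um else up)

/-- The periodic orbit `O`. -/
def orbitO (l m : ℝ) (η : E2) (um up : ℝ) : Set E2 :=
  (fun s => phi l m η s (Pplus l m η um up) um) '' Icc (0 : ℝ) (π / m) ∪
    (fun s => phi l m η s (Pminus l m η um up) up) '' Icc (0 : ℝ) (π / m)


/-! ### Auxiliary lemmas for `stmt16` -/

lemma rot_pi' (v : E2) : rotMap π v = -v := by
  ext i; fin_cases i <;> simp [rotMap, vec2, PiLp.neg_apply]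

lemma rot_pi2' (v : E2) : rotMap (π/2) v = thetaMap v := by
  ext i; fin_cases i <;> simp [rotMap, thetaMap, vec2]

lemma theta_add' (x y : E2) : thetaMap (x + y) = thetaMap x + thetaMap y := by
  ext i; fin_cases i <;> simp [thetaMap, vec2, PiLp.add_apply] <;> ring

lemma theta_smul' (r : ℝ) (x : E2) : thetaMap (r • x) = r • thetaMap x := by
  ext i; fin_cases i <;> simp [thetaMap, vec2, PiLp.smul_apply, smul_eq_mul]

lemma theta_sub' (x y : E2) : thetaMap (x - y) = thetaMap x - thetaMap y := by
  ext i; fin_cases i <;> simp [thetaMap, vec2, PiLp.sub_apply] <;> ring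

lemma expA_pi' (l m : ℝ) (hm : m ≠ 0) (v : E2) :
    expA l m (π/m) v = (-(rho l m)) • v := by
  unfold expA rho
  rw [show π/m*m = π from div_mul_cancel₀ _ hm, show π/m*l = π*l/m by ring, rot_pi']
  rw [smul_neg, neg_smul]

lemma expA_quarter' (l m : ℝ) (hm : m ≠ 0) (v : E2) :
    expA l m (π/(2*m)) v = Real.exp (π*l/(2*m)) • thetaMap v := by
  unfold expA
  rw [show π/(2*m)*m = π/2 by field_simp, show π/(2*m)*l = π*l/(2*m) by ring,
    rot_pi2']

lemma phi_pi' (l m : ℝ) (hm : m ≠ 0) (η : E2) (v : E2) (u : ℝ) :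
    phi l m η (π/m) v u =
      (-(rho l m)) • v + (-((1 + rho l m) * u)) • AinvMap l m η := by
  unfold phi equil; rw [expA_pi' l m hm]; module

lemma phi_quarter' (l m : ℝ) (hm : m ≠ 0) (η : E2) (v : E2) (u : ℝ) :
    phi l m η (π/(2*m)) v u =
      Real.exp (π*l/(2*m)) • thetaMap v
        + (Real.exp (π*l/(2*m)) * u) • thetaMap (AinvMap l m η)
        + (-u) • AinvMap l m η := by
  unfold phi equil; rw [expA_quarter' l m hm, theta_sub', theta_smul']; module

lemma basis_solve' (c : E2) (hc : c 0 ^ 2 + c 1 ^ 2 ≠ 0) (d : E2) :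
    ∃ A B : ℝ, d = A • thetaMap c + B • c := by
  refine ⟨(-(d 0)*(c 1) + d 1 * c 0)/(c 0^2+c 1^2),
          (d 0*c 0 + d 1 * c 1)/(c 0^2+c 1^2), ?_⟩
  ext i; fin_cases i <;>
    simp [thetaMap, vec2, PiLp.add_apply, PiLp.smul_apply, smul_eq_mul] <;>
    field_simp <;> ring

lemma controls_exist' (Ω : Set ℝ) (hΩ : Ω.OrdConnected)
    (hunb : ¬BddAbove Ω ∨ ¬BddBelow Ω) (ρ : ℝ) (hρ : 0 < ρ) (t : ℝ) :
    ∃ u₁ ∈ Ω, ∃ u₂ ∈ Ω, ρ*u₁ - u₂ = t := by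
  rcases hunb with h | h
  · rw [not_bddAbove_iff] at h
    obtain ⟨u₀, hu₀, -⟩ := h 0
    rcases le_or_gt t (ρ*u₀ - u₀) with ht | ht
    · obtain ⟨y, hy, hy2⟩ := h (ρ*u₀ - t)
      exact ⟨u₀, hu₀, ρ*u₀ - t, hΩ.out hu₀ hy ⟨by linarith, hy2.le⟩, by ring⟩
    · obtain ⟨y, hy, hy2⟩ := h ((t+u₀)/ρ)
      refine ⟨(t+u₀)/ρ, hΩ.out hu₀ hy ⟨?_, hy2.le⟩, u₀, hu₀, by field_simp; ring⟩
      rw [le_div_iff₀ hρ]; nlinarith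
  · rw [not_bddBelow_iff] at h
    obtain ⟨u₀, hu₀, -⟩ := h 0
    rcases le_or_gt (ρ*u₀ - u₀) t with ht | ht
    · obtain ⟨y, hy, hy2⟩ := h (ρ*u₀ - t)
      exact ⟨u₀, hu₀, ρ*u₀ - t, hΩ.out hy hu₀ ⟨hy2.le, by linarith⟩, by ring⟩
    · obtain ⟨y, hy, hy2⟩ := h ((t+u₀)/ρ)
      refine ⟨(t+u₀)/ρ, hΩ.out hy hu₀ ⟨hy2.le, ?_⟩, u₀, hu₀, by field_simp; ring⟩
      rw [div_le_iff₀ hρ]; nlinarith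

lemma omega_nonempty' (Ω : Set ℝ) (hunb : ¬BddAbove Ω ∨ ¬BddBelow Ω) : Ω.Nonempty := by
  rcases hunb with h | h
  · rw [not_bddAbove_iff] at h; obtain ⟨y, hy, -⟩ := h 0; exact ⟨y, hy⟩
  · rw [not_bddBelow_iff] at h; obtain ⟨y, hy, -⟩ := h 0; exact ⟨y, hy⟩

lemma ainv_ne' (l m : ℝ) (hm : 0 < m) (η : E2) (hη : η ≠ 0) :
    (AinvMap l m η) 0 ^ 2 + (AinvMap l m η) 1 ^ 2 ≠ 0 := by
  have hlm : (0:ℝ) < l^2 + m^2 := by positivity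
  have hη' : η 0 ≠ 0 ∨ η 1 ≠ 0 := by
    by_contra h
    push_neg at h
    apply hη
    ext i; fin_cases i <;> simp [h.1, h.2]
  have h0 : (AinvMap l m η) 0 = (1/(l^2+m^2)) * (l * η 0 + m * η 1) := by
    simp [AinvMap, vec2, PiLp.smul_apply, smul_eq_mul]
  have h1 : (AinvMap l m η) 1 = (1/(l^2+m^2)) * (-m * η 0 + l * η 1) := by
    simp [AinvMap, vec2, PiLp.smul_apply, smul_eq_mul]
  rw [h0, h1]
  have key : (1/(l^2+m^2) * (l * η 0 + m * η 1))^2 + (1/(l^2+m^2) * (-m * η 0 + l * η 1))^2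
      = (η 0 ^2 + η 1 ^2) / (l^2+m^2) := by
    field_simp; ring
  rw [key]
  have : 0 < η 0 ^2 + η 1 ^2 := by
    rcases hη' with h | h <;> positivity
  positivity

/-- if the control range `Ω` is an unbounded interval, the system is
controllable. -/
theorem stmt16 (l m : ℝ) (hm : 0 < m) (η : E2) (hη : η ≠ 0)
    (Ω : Set ℝ) (hΩ : Ω.OrdConnected) (hunb : ¬BddAbove Ω ∨ ¬BddBelow Ω) :
    ∀ v w : E2, w ∈ ReachPlus l m η Ω v := by
  intro v w
  have hm' : m ≠ 0 := hm.ne'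
  set ρ := rho l m with hρdef
  have hρ : 0 < ρ := Real.exp_pos _
  set σ := Real.exp (π*l/(2*m)) with hσdef
  have hσ : 0 < σ := Real.exp_pos _
  set c := AinvMap l m η with hcdef
  have hc : c 0 ^ 2 + c 1 ^ 2 ≠ 0 := ainv_ne' l m hm η hη
  obtain ⟨u₀, hu₀⟩ := omega_nonempty' Ω hunb
  obtain ⟨A, B, hAB⟩ := basis_solve' c hc (w - (σ*ρ^4) • thetaMap v)
  obtain ⟨u₁, hu₁, u₂, hu₂, h12⟩ := controls_exist' Ω hΩ hunb ρ hρ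
    ((A/(ρ^2*σ) - u₀)/(1+ρ))
  obtain ⟨u₃, hu₃, u₄, hu₄, h34⟩ := controls_exist' Ω hΩ hunb ρ hρ
    ((B + ρ^2*u₀)/(1+ρ))
  refine ⟨[(π/m,u₁),(π/m,u₂),(π/(2*m),u₀),(π/m,u₃),(π/m,u₄)], ?_, ?_⟩
  · intro p hp
    have hπm : (0:ℝ) ≤ π/m := by positivity
    have hπ2m : (0:ℝ) ≤ π/(2*m) := by positivity
    simp only [List.mem_cons, List.not_mem_nil, or_false] at hp
    rcases hp with h|h|h|h|h <;> subst h <;> exact ⟨by assumption, by assumption⟩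
  · have key : trajComp l m η v [(π/m,u₁),(π/m,u₂),(π/(2*m),u₀),(π/m,u₃),(π/m,u₄)]
        = (σ*ρ^4) • thetaMap v
          + (ρ^2*σ*((1+ρ)*(ρ*u₁-u₂) + u₀)) • thetaMap c
          + ((1+ρ)*(ρ*u₃-u₄) - ρ^2*u₀) • c := by
      simp only [trajComp, phi_pi' l m hm' η, phi_quarter' l m hm' η,
        theta_add', theta_smul', ← hρdef, ← hσdef, ← hcdef]
      module
    rw [key, h12, h34]
    have h1ρ : (1:ℝ) + ρ ≠ 0 := by positivity
    have e1 : ρ^2*σ*((1+ρ)*((A/(ρ^2*σ) - u₀)/(1+ρ)) + u₀) = A := by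
      field_simp; ring
    have e2 : (1+ρ)*((B + ρ^2*u₀)/(1+ρ)) - ρ^2*u₀ = B := by
      field_simp; ring
    rw [e1, e2]
    have := sub_eq_iff_eq_add.mp hAB
    rw [this]; module
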